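/- arXiv:2101.01676 — 2 statements merged into one kernel-verified Lean document; each statement's English description precedes it below -/
import Mathlib

section
/- Let 𝔐 be a class of preference models such that for every M ∈ 𝔐 and every world w of M there is a characteristic formula ξ_w ∈ L_≤ with M,w' ⊨ ξ_w iff w' = w, and let ★ be a dynamic operator closed over 𝔐. Then ★ is 𝔐-DP1-compliant if and only if for every M ∈ 𝔐, every propositional formula φ ∈ L_0, and all worlds w, w' ∈ ⟦φ⟧_M: w ≤ w' iff w ≤_{★φ} w'. -/
inductive PForm (P : Type) : Type
  | atom : P → PForm P
  | neg  : PForm P → PForm P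
  | and  : PForm P → PForm P → PForm P

inductive DForm (P : Type) : Type
  | atom  : P → DForm P
  | neg   : DForm P → DForm P
  | and   : DForm P → DForm P → DForm P
  | all   : DForm P → DForm P
  | boxLe : DForm P → DForm P
  | boxLt : DForm P → DForm P
  | dyn   : PForm P → DForm P → DForm P

structure PrefModel (P : Type) where
  W : Type
  le : W → W → Prop
  refl : ∀ w, le w w
  trans : ∀ w₁ w₂ w₃, le w₁ w₂ → le w₂ w₃ → le w₁ w₃
  wf : WellFounded (fun w w' => le w w' ∧ ¬ le w' w)
  val : P → Set W

namespace PrefModel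
variable {P : Type}
def lt (M : PrefModel P) (w w' : M.W) : Prop := M.le w w' ∧ ¬ M.le w' w
def Min (M : PrefModel P) (S : Set M.W) : Set M.W :=
  {w | w ∈ S ∧ ¬ ∃ w' ∈ S, M.le w' w ∧ ¬ M.le w w'}
end PrefModel

def psat {P : Type} (M : PrefModel P) : PForm P → M.W → Prop
  | .atom p, w => w ∈ M.val p
  | .neg φ, w => ¬ psat M φ w
  | .and φ ψ, w => psat M φ w ∧ psat M ψ w

def pext {P : Type} (M : PrefModel P) (φ : PForm P) : Set M.W := {w | psat M φ w}

structure DynOp (P : Type) where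
  rel : (M : PrefModel P) → PForm P → M.W → M.W → Prop
  refl : ∀ M φ w, rel M φ w w
  trans : ∀ M φ w₁ w₂ w₃, rel M φ w₁ w₂ → rel M φ w₂ w₃ → rel M φ w₁ w₃
  wf : ∀ M φ, WellFounded (fun w w' => rel M φ w w' ∧ ¬ rel M φ w' w)

def DynOp.apply {P : Type} (s : DynOp P) (M : PrefModel P) (φ : PForm P) : PrefModel P where
  W := M.W
  le := s.rel M φ
  refl := s.refl M φ
  trans := s.trans M φ
  wf := s.wf M φ
  val := M.val

def DynOp.srel {P : Type} (s : DynOp P) (M : PrefModel P) (φ : PForm P) (w w' : M.W) : Prop :=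
  s.rel M φ w w' ∧ ¬ s.rel M φ w' w

def PForm.toD {P : Type} : PForm P → DForm P
  | .atom p => .atom p
  | .neg φ => .neg φ.toD
  | .and φ ψ => .and φ.toD ψ.toD

namespace DForm
variable {P : Type}
def imp (ξ ψ : DForm P) : DForm P := .neg (.and ξ (.neg ψ))
def iff (ξ ψ : DForm P) : DForm P := .and (imp ξ ψ) (imp ψ ξ)
def or (ξ ψ : DForm P) : DForm P := .neg (.and (.neg ξ) (.neg ψ))
def exi (ξ : DForm P) : DForm P := .neg (.all (.neg ξ))
def diaLt (ξ : DForm P) : DForm P := .neg (.boxLt (.neg ξ))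
def mu (ξ : DForm P) : DForm P := .and ξ (.neg (diaLt ξ))
def bel (ψ χ : DForm P) : DForm P := .all (imp (mu χ) ψ)
end DForm

def dsat {P : Type} (s : DynOp P) : DForm P → (M : PrefModel P) → M.W → Prop
  | .atom p, M, w => w ∈ M.val p
  | .neg ξ, M, w => ¬ dsat s ξ M w
  | .and ξ₁ ξ₂, M, w => dsat s ξ₁ M w ∧ dsat s ξ₂ M w
  | .all ξ, M, _ => ∀ w', dsat s ξ M w'
  | .boxLe ξ, M, w => ∀ w', M.le w' w → dsat s ξ M w'
  | .boxLt ξ, M, w => ∀ w', M.lt w' w → dsat s ξ M w'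
  | .dyn φ ξ, M, w => dsat s ξ (s.apply M φ) w

def ClosedOver {P : Type} (s : DynOp P) (𝔐 : Set (PrefModel P)) : Prop :=
  ∀ M ∈ 𝔐, ∀ φ : PForm P, s.apply M φ ∈ 𝔐

inductive Form (P : Type) : Type
  | atom : P → Form P
  | neg : Form P → Form P
  | and : Form P → Form P → Form P
  | all : Form P → Form P
  | boxLe : Form P → Form P
  | boxLt : Form P → Form P

def sat {P : Type} (M : PrefModel P) : Form P → M.W → Prop
  | .atom p, w => w ∈ M.val p
  | .neg φ, w => ¬ sat M φ w
  | .and φ ψ, w => sat M φ w ∧ sat M ψ w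
  | .all φ, _ => ∀ w', sat M φ w'
  | .boxLe φ, w => ∀ w', M.le w' w → sat M φ w'
  | .boxLt φ, w => ∀ w', M.lt w' w → sat M φ w'

/-- `★` is `𝔐`-DP1-compliant. -/
def DP1Compliant {P : Type} (s : DynOp P) (𝔐 : Set (PrefModel P)) : Prop :=
  ∀ M ∈ 𝔐, ∀ (φ : PForm P) (w w' : M.W), psat M φ w → psat M φ w' →
    -- (DP1a), non-strict and strict versions
    ((s.rel M φ w w' → ∀ ξ : DForm P, dsat s (.dyn φ ξ) M w →
        ∃ w'' : M.W, psat M φ w'' ∧ dsat s (.dyn φ ξ) M w'' ∧ M.le w'' w') ∧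
     (s.srel M φ w w' → ∀ ξ : DForm P, dsat s (.dyn φ ξ) M w →
        ∃ w'' : M.W, psat M φ w'' ∧ dsat s (.dyn φ ξ) M w'' ∧ M.lt w'' w') ∧
    -- (DP1b), non-strict and strict versions
     (M.le w w' → ∀ ξ : DForm P, dsat s (.dyn φ ξ) M w →
        ∃ w'' : M.W, psat M φ w'' ∧ dsat s (.dyn φ ξ) M w'' ∧ s.rel M φ w'' w') ∧
     (M.lt w w' → ∀ ξ : DForm P, dsat s (.dyn φ ξ) M w →
        ∃ w'' : M.W, psat M φ w'' ∧ dsat s (.dyn φ ξ) M w'' ∧ s.srel M φ w'' w'))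

def Form.toD {P : Type} : Form P → DForm P
  | .atom p => .atom p
  | .neg φ => .neg φ.toD
  | .and φ ψ => .and φ.toD ψ.toD
  | .all φ => .all φ.toD
  | .boxLe φ => .boxLe φ.toD
  | .boxLt φ => .boxLt φ.toD

lemma dsat_toD {P : Type} (s : DynOp P) (ψ : Form P) (M : PrefModel P) (w : M.W) :
    dsat s ψ.toD M w ↔ sat M ψ w := by
  induction ψ generalizing w with
  | atom p => rfl
  | neg φ ih => simp [Form.toD, dsat, sat, ih]
  | and φ ψ ih1 ih2 => simp [Form.toD, dsat, sat, ih1, ih2]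
  | all φ ih => simp [Form.toD, dsat, sat, ih]
  | boxLe φ ih => simp [Form.toD, dsat, sat, ih]
  | boxLt φ ih => simp [Form.toD, dsat, sat, ih]

theorem dp1_compliance_on_models_with_characteristic_formulas {P : Type}
    (𝔐 : Set (PrefModel P)) (s : DynOp P) (hclosed : ClosedOver s 𝔐)
    (hchar : ∀ M ∈ 𝔐, ∀ w : M.W, ∃ ξ : Form P, ∀ w' : M.W, sat M ξ w' ↔ w' = w) :
    DP1Compliant s 𝔐 ↔
      ∀ M ∈ 𝔐, ∀ (φ : PForm P) (w w' : M.W), psat M φ w → psat M φ w' →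
        (M.le w w' ↔ s.rel M φ w w') := by
  constructor
  · intro h M hM φ w w' hw hw'
    obtain ⟨ξ, hξ⟩ := hchar (s.apply M φ) (hclosed M hM φ) w
    have hdt : dsat s (.dyn φ ξ.toD) M w := by
      show dsat s ξ.toD (s.apply M φ) w
      exact (dsat_toD s ξ (s.apply M φ) w).mpr ((hξ w).mpr rfl)
    obtain ⟨h1, _, h3, _⟩ := h M hM φ w w' hw hw'
    constructor
    · intro hle
      obtain ⟨w'', _, hd'', hr''⟩ := h3 hle ξ.toD hdt
      have hw'' : w'' = w := (hξ w'').mp ((dsat_toD s ξ (s.apply M φ) w'').mp hd'')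
      exact hw'' ▸ hr''
    · intro hrel
      obtain ⟨w'', _, hd'', hl''⟩ := h1 hrel ξ.toD hdt
      have hw'' : w'' = w := (hξ w'').mp ((dsat_toD s ξ (s.apply M φ) w'').mp hd'')
      exact hw'' ▸ hl''
  · intro h M hM φ w w' hw hw'
    have hiff := h M hM φ w w' hw hw'
    have hiff' := h M hM φ w' w hw' hw
    refine ⟨?_, ?_, ?_, ?_⟩
    · intro hrel ξ hξ
      exact ⟨w, hw, hξ, hiff.mpr hrel⟩
    · intro hsrel ξ hξ
      exact ⟨w, hw, hξ, hiff.mpr hsrel.1, fun hle => hsrel.2 (hiff'.mp hle)⟩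
    · intro hle ξ hξ
      exact ⟨w, hw, hξ, hiff.mp hle⟩
    · intro hlt ξ hξ
      exact ⟨w, hw, hξ, hiff.mp hlt.1, fun hr => hlt.2 (hiff'.mpr hr)⟩
end

section
/- Let 𝔐 be a class of preference models and ★ a dynamic operator closed over 𝔐. The schema [★φ][<](φ → ξ) → (¬φ → [<][★φ](φ → ξ)) is valid in ⟨𝔐, ★⟩ for all φ ∈ L_0 and ξ ∈ L_≤(★) if and only if ★ is 𝔐-DP3-compliant. -/
/-- `★` is `𝔐`-DP3-compliant. -/
def DP3Compliant {P : Type} (s : DynOp P) (𝔐 : Set (PrefModel P)) : Prop :=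
  ∀ M ∈ 𝔐, ∀ (φ : PForm P) (w w' : M.W),
    psat M φ w → ¬ psat M φ w' → M.lt w w' →
      ∀ ξ : DForm P, dsat s (.dyn φ ξ) M w →
        ∃ w'' : M.W, psat M φ w'' ∧ dsat s (.dyn φ ξ) M w'' ∧ s.srel M φ w'' w'

lemma toD_sat {P : Type} (s : DynOp P) (ψ : PForm P) (M : PrefModel P) (w : M.W) :
    dsat s ψ.toD M w ↔ psat M ψ w := by
  induction ψ with
  | atom p => rfl
  | neg φ ih => simp [PForm.toD, dsat, psat, ih]
  | and φ χ ih1 ih2 => simp [PForm.toD, dsat, psat, ih1, ih2]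

lemma psat_apply {P : Type} (s : DynOp P) (φ ψ : PForm P) (M : PrefModel P) (w : M.W) :
    psat (s.apply M φ) ψ w ↔ psat M ψ w := by
  induction ψ with
  | atom p => rfl
  | neg χ ih => simp [psat, ih]
  | and χ₁ χ₂ ih1 ih2 => simp [psat, ih1, ih2]

lemma dsat_imp {P : Type} (s : DynOp P) (ξ ψ : DForm P) (M : PrefModel P) (w : M.W) :
    dsat s (ξ.imp ψ) M w ↔ (dsat s ξ M w → dsat s ψ M w) := by
  simp [DForm.imp, dsat]

theorem dp3_compliance_characterisation {P : Type}
    (𝔐 : Set (PrefModel P)) (s : DynOp P) (hclosed : ClosedOver s 𝔐) :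
    (∀ (φ : PForm P) (ξ : DForm P), ∀ M ∈ 𝔐, ∀ w : M.W,
      dsat s ((DForm.dyn φ (.boxLt (φ.toD.imp ξ))).imp
        ((DForm.neg φ.toD).imp (.boxLt (.dyn φ (φ.toD.imp ξ))))) M w) ↔
      DP3Compliant s 𝔐 := by
  constructor
  · -- validity ⇒ DP3
    intro hval M hM φ w w' hw hw' hlt ξ hξ
    by_contra hno
    push_neg at hno
    have hsch := hval φ (.neg ξ) M hM w'
    rw [dsat_imp, dsat_imp] at hsch
    have hprem : dsat s (DForm.dyn φ (.boxLt (φ.toD.imp (.neg ξ)))) M w' := by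
      show ∀ u, (s.apply M φ).lt u w' → dsat s (φ.toD.imp (.neg ξ)) (s.apply M φ) u
      intro u hu
      rw [dsat_imp, toD_sat, psat_apply s φ φ M u]
      intro hφu hξu
      exact hno u hφu hξu hu
    have hnegφ : dsat s (DForm.neg φ.toD) M w' := by
      show ¬ dsat s φ.toD M w'
      rw [toD_sat]; exact hw'
    have hconc := hsch hprem hnegφ w hlt
    have h2 : dsat s (φ.toD.imp (.neg ξ)) (s.apply M φ) w := hconc
    rw [dsat_imp s _ _ (s.apply M φ) w, toD_sat s φ (s.apply M φ) w, psat_apply s φ φ M w] at h2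
    exact h2 hw hξ
  · -- DP3 ⇒ validity
    intro hdp φ ξ M hM w
    rw [dsat_imp, dsat_imp]
    intro hprem hnegφ u hu
    show dsat s (φ.toD.imp ξ) (s.apply M φ) u
    rw [dsat_imp s _ _ (s.apply M φ) u, toD_sat s φ (s.apply M φ) u, psat_apply s φ φ M u]
    intro hφu
    by_contra hξu
    have hnφw : ¬ psat M φ w := by
      have : ¬ dsat s φ.toD M w := hnegφ
      rwa [toD_sat] at this
    have hdn : dsat s (DForm.dyn φ (.neg ξ)) M u := hξu
    obtain ⟨w'', hφ'', hξ'', hsrel⟩ := hdp M hM φ u w hφu hnφw hu (.neg ξ) hdn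
    have h3 : dsat s (φ.toD.imp ξ) (s.apply M φ) w'' := hprem w'' hsrel
    rw [dsat_imp s _ _ (s.apply M φ) w'', toD_sat s φ (s.apply M φ) w'', psat_apply s φ φ M w''] at h3
    exact hξ'' (h3 hφ'')
end
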